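/- Let G be a finite group, H, L ≤ G, x, y ∈ G with y = l x⁻¹ h for some l ∈ L, h ∈ H, and let K ≤ H ∩ ˣL, Q ≤ L ∩ ʸH. Then the map α ↦ αl induces a bijection between the set of double cosets {α ∈ K^x\L/Q : xαy ∈ H} and the set of double cosets K^x\(L ∩ H^x)/Q^l. -/

import Mathlib

open Pointwise

private lemma doset_image_right {G : Type*} [Group G] (a g : G) (s t : Set G) :
    (fun z => z * g) '' (DoubleCoset.doubleCoset a s t) =
      DoubleCoset.doubleCoset (a * g) s ((fun z => g⁻¹ * z * g) '' t) := by
  ext w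
  simp only [Set.mem_image, DoubleCoset.mem_doubleCoset]
  constructor
  · rintro ⟨v, ⟨m, hm, n, hn, rfl⟩, rfl⟩
    exact ⟨m, hm, g⁻¹ * n * g, ⟨n, hn, rfl⟩, by group⟩
  · rintro ⟨m, hm, n', ⟨n, hn, rfl⟩, rfl⟩
    exact ⟨m * a * n, ⟨m, hm, n, hn, rfl⟩, by group⟩

private lemma coe_conj_smul {G : Type*} [Group G] (g : G) (Q : Subgroup G) :
    ((MulAut.conj g⁻¹ • Q : Subgroup G) : Set G) = (fun z => g⁻¹ * z * g) '' (Q : Set G) := by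
  ext q
  simp only [Set.mem_image, SetLike.mem_coe, Subgroup.mem_smul_pointwise_iff_exists,
    MulAut.smul_def, MulAut.conj_apply, inv_inv]

/-- Let `y = l x⁻¹ h` with `l ∈ L`, `h ∈ H`, and let `K ≤ H ∩ ˣL`, `Q ≤ L ∩ ʸH`. The map
`α ↦ α l` induces a bijection between the set of `(K^x, Q)`-double cosets of elements
`α ∈ L` with `x α y ∈ H` and the set of `(K^x, Q^l)`-double cosets in `L ∩ H^x`. -/
theorem doset_bijection (G : Type*) [Group G] (H L K Q : Subgroup G) (x y l h : G)
    (hl : l ∈ L) (hh : h ∈ H) (hy : y = l * x⁻¹ * h)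
    (hK : K ≤ H ⊓ (MulAut.conj x • L)) (hQ : Q ≤ L ⊓ (MulAut.conj y • H)) :
    ∃ e : {S : Set G | ∃ α, α ∈ L ∧ x * α * y ∈ H ∧
            S = DoubleCoset.doubleCoset α ((MulAut.conj x⁻¹ • K : Subgroup G) : Set G) (Q : Set G)} ≃
          {S : Set G | ∃ β, β ∈ L ⊓ (MulAut.conj x⁻¹ • H) ∧
            S = DoubleCoset.doubleCoset β ((MulAut.conj x⁻¹ • K : Subgroup G) : Set G)
              ((MulAut.conj l⁻¹ • Q : Subgroup G) : Set G)},
      ∀ (α : G) (hαL : α ∈ L) (hα : x * α * y ∈ H),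
        (e ⟨DoubleCoset.doubleCoset α ((MulAut.conj x⁻¹ • K : Subgroup G) : Set G) (Q : Set G),
            ⟨α, hαL, hα, rfl⟩⟩ : Set G) =
          DoubleCoset.doubleCoset (α * l) ((MulAut.conj x⁻¹ • K : Subgroup G) : Set G)
            ((MulAut.conj l⁻¹ • Q : Subgroup G) : Set G) := by
  refine ⟨{
    toFun := fun S => ⟨(fun z => z * l) '' S.1, ?_⟩
    invFun := fun S => ⟨(fun z => z * l⁻¹) '' S.1, ?_⟩
    left_inv := ?_
    right_inv := ?_ }, ?_⟩
  · obtain ⟨α, hαL, hα, hS⟩ := S.2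
    refine ⟨α * l, ⟨mul_mem hαL hl, ?_⟩, ?_⟩
    · refine (Subgroup.mem_smul_pointwise_iff_exists _ _ _).2 ⟨x * (α * l) * x⁻¹, ?_, ?_⟩
      · have : x * (α * l) * x⁻¹ = (x * α * y) * h⁻¹ := by rw [hy]; group
        rw [this]; exact mul_mem hα (inv_mem hh)
      · simp [MulAut.smul_def]; group
    · rw [hS, doset_image_right, ← coe_conj_smul l Q]
  · obtain ⟨β, ⟨hβL, hβH⟩, hS⟩ := S.2
    obtain ⟨s, hs, hsx⟩ := (Subgroup.mem_smul_pointwise_iff_exists _ _ _).1 hβH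
    simp only [MulAut.smul_def, MulAut.conj_apply, inv_inv] at hsx
    refine ⟨β * l⁻¹, mul_mem hβL (inv_mem hl), ?_, ?_⟩
    · have h2 : x * (β * l⁻¹) * y = s * h := by rw [hy, ← hsx]; group
      rw [h2]; exact mul_mem hs hh
    · rw [hS, doset_image_right, coe_conj_smul l Q]
      congr 1
      rw [Set.image_image]
      have : (fun q => l⁻¹⁻¹ * (l⁻¹ * q * l) * l⁻¹) = fun q : G => q := by funext q; group
      rw [this]
      simp
  · rintro ⟨S, hS⟩
    ext w
    simp only [Set.image_image, Set.mem_image, mul_inv_cancel_right]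
    exact ⟨fun ⟨v, hv, he⟩ => he ▸ hv, fun hw => ⟨w, hw, rfl⟩⟩
  · rintro ⟨S, hS⟩
    ext w
    simp only [Set.image_image, Set.mem_image, inv_mul_cancel_right]
    exact ⟨fun ⟨v, hv, he⟩ => he ▸ hv, fun hw => ⟨w, hw, rfl⟩⟩
  · intro α hαL hα
    show (fun z => z * l) '' _ = _
    rw [doset_image_right, ← coe_conj_smul l Q]
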